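/- arXiv:1103.3984 — 2 statements merged into one kernel-verified Lean document; each statement's English description precedes it below -/
import Mathlib

section
/- Let n ≥ 1, let q_1, …, q_n ∈ ℂ[z] with q_i(0) = 0, and let p ∈ ℂ[z] with p(0) = 0, p(z) ≠ z, and deg p ≥ 2. Let χ_1, …, χ_n ∈ ℂ[[z]] be the unique power series solutions with χ_i(0) = 0 of χ_i(z) = χ_i(p(z)) + q_i(z). Suppose 1, q_1, …, q_n are linearly independent over ℂ and that for every (s_1,…,s_n) ∈ ℂ^n \ {0} the degree of Σ s_i q_i is not divisible by deg p. Then for every (s_1,…,s_n) ∈ ℂ^n \ {0}, the power series Σ_{i=1}^n s_i χ_i is not a polynomial. -/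
open PowerSeries Finset

/-- Composition `f ∘ g` of formal power series, defined coefficientwise; this agrees with
the usual substitution when `g` has zero constant coefficient. -/
noncomputable def psComp (f g : PowerSeries ℂ) : PowerSeries ℂ :=
  PowerSeries.mk fun n => ∑ k ∈ Finset.range (n + 1), (coeff k f) * (coeff n (g ^ k))


lemma pcoeff_pow_eq_zero {p : Polynomial ℂ} (hp0 : p.eval 0 = 0) {n k : ℕ} (h : n < k) :
    (p ^ k).coeff n = 0 := by
  have hX : (Polynomial.X : Polynomial ℂ) ∣ p := by
    rw [Polynomial.X_dvd_iff]
    simpa [Polynomial.coeff_zero_eq_eval_zero] using hp0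
  have hk : (Polynomial.X : Polynomial ℂ) ^ k ∣ p ^ k := pow_dvd_pow_of_dvd hX k
  exact (Polynomial.X_pow_dvd_iff.mp hk) n h

lemma psComp_coe (P p : Polynomial ℂ) (hp0 : p.eval 0 = 0) :
    psComp (P : PowerSeries ℂ) (p : PowerSeries ℂ) = ((P.comp p : Polynomial ℂ) : PowerSeries ℂ) := by
  ext m
  rw [psComp, PowerSeries.coeff_mk]
  have hcomp : P.comp p = ∑ k ∈ Finset.range (P.natDegree + 1), Polynomial.C (P.coeff k) * p ^ k := by
    rw [Polynomial.comp, Polynomial.eval₂_eq_sum_range]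
  simp only [← Polynomial.coe_pow, Polynomial.coeff_coe]
  rw [hcomp, Polynomial.finset_sum_coeff]
  simp only [Polynomial.coeff_C_mul]
  have h1 : ∀ k ∈ Finset.range (max P.natDegree m + 1), k ∉ Finset.range (m + 1) →
      P.coeff k * (p ^ k).coeff m = 0 := by
    intro k _ hk
    rw [Finset.mem_range, not_lt] at hk
    rw [pcoeff_pow_eq_zero hp0 (by omega), mul_zero]
  have h2 : ∀ k ∈ Finset.range (max P.natDegree m + 1), k ∉ Finset.range (P.natDegree + 1) →
      P.coeff k * (p ^ k).coeff m = 0 := by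
    intro k _ hk
    rw [Finset.mem_range, not_lt] at hk
    rw [Polynomial.coeff_eq_zero_of_natDegree_lt (by omega), zero_mul]
  rw [Finset.sum_subset (Finset.range_subset_range.mpr (by omega : m + 1 ≤ max P.natDegree m + 1)) h1,
    Finset.sum_subset (Finset.range_subset_range.mpr (by omega : P.natDegree + 1 ≤ max P.natDegree m + 1)) h2]

lemma psComp_sum {ι : Type*} (t : Finset ι) (s : ι → ℂ) (f : ι → PowerSeries ℂ) (g : PowerSeries ℂ) :
    psComp (∑ i ∈ t, PowerSeries.C (s i) * f i) g
      = ∑ i ∈ t, PowerSeries.C (s i) * psComp (f i) g := by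
  ext m
  simp only [psComp, PowerSeries.coeff_mk, map_sum, PowerSeries.coeff_C_mul,
    Finset.sum_mul, Finset.mul_sum, mul_assoc]
  rw [Finset.sum_comm]

/-- Under condition (1) of the lemma (every nontrivial linear combination of the `qᵢ` has
degree not divisible by `deg p`), every nontrivial linear combination of the solutions
`χᵢ` of `χᵢ(z) = χᵢ(p(z)) + qᵢ(z)` is not a polynomial. -/
theorem stmt4 (n : ℕ) (hn : 1 ≤ n) (p : Polynomial ℂ) (q : Fin n → Polynomial ℂ)
    (hq0 : ∀ i, (q i).eval 0 = 0) (hp0 : p.eval 0 = 0) (hpX : p ≠ Polynomial.X)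
    (hpd : 2 ≤ p.natDegree)
    (χ : Fin n → PowerSeries ℂ)
    (hχ0 : ∀ i, constantCoeff (χ i) = 0)
    (hχ : ∀ i, χ i = psComp (χ i) (p : PowerSeries ℂ) + ((q i : Polynomial ℂ) : PowerSeries ℂ))
    (hli : LinearIndependent ℂ (Fin.cons (1 : Polynomial ℂ) q : Fin (n + 1) → Polynomial ℂ))
    (hdvd : ∀ s : Fin n → ℂ, s ≠ 0 → ¬ p.natDegree ∣ (∑ i, s i • q i).natDegree) :
    ∀ s : Fin n → ℂ, s ≠ 0 →
      ¬ ∃ P : Polynomial ℂ, (∑ i, (PowerSeries.C (s i)) * χ i) = (P : PowerSeries ℂ) := by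
  intro s hs ⟨P, hP⟩
  set Q : Polynomial ℂ := ∑ i, s i • q i with hQ
  -- the key functional equation for P
  have key : (P : PowerSeries ℂ) = ((P.comp p : Polynomial ℂ) : PowerSeries ℂ) + (Q : PowerSeries ℂ) := by
    have hQcoe : (Q : PowerSeries ℂ) = ∑ i, PowerSeries.C (s i) * ((q i : Polynomial ℂ) : PowerSeries ℂ) := by
      ext m
      simp [hQ, Polynomial.coeff_coe, Polynomial.finset_sum_coeff, PowerSeries.coeff_C_mul,
        Polynomial.coeff_smul, smul_eq_mul]
    calc (P : PowerSeries ℂ) = ∑ i, PowerSeries.C (s i) * χ i := hP.symm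
      _ = ∑ i, PowerSeries.C (s i) * (psComp (χ i) (p : PowerSeries ℂ) + ((q i : Polynomial ℂ) : PowerSeries ℂ)) := by
          apply Finset.sum_congr rfl; intro i _; rw [← hχ i]
      _ = psComp (∑ i, PowerSeries.C (s i) * χ i) (p : PowerSeries ℂ) + (Q : PowerSeries ℂ) := by
          rw [psComp_sum, hQcoe]
          simp [mul_add, Finset.sum_add_distrib]
      _ = ((P.comp p : Polynomial ℂ) : PowerSeries ℂ) + (Q : PowerSeries ℂ) := by
          rw [hP, psComp_coe P p hp0]
  have keyP : P = P.comp p + Q := by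
    have := key
    rw [← Polynomial.coe_add] at this
    exact_mod_cast this
  have hQeq : Q = P - P.comp p := by linear_combination -keyP
  by_cases hPd : P.natDegree = 0
  · obtain ⟨c, rfl⟩ := Polynomial.natDegree_eq_zero.mp hPd
    have : Q = 0 := by simp [hQeq]
    exact hdvd s hs (by rw [← hQ, this]; simp)
  · have hPd1 : 1 ≤ P.natDegree := Nat.one_le_iff_ne_zero.mpr hPd
    have hcompd : (P.comp p).natDegree = P.natDegree * p.natDegree := Polynomial.natDegree_comp
    have hlt : P.natDegree < (P.comp p).natDegree := by
      rw [hcompd]; nlinarith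
    have hQd : Q.natDegree = P.natDegree * p.natDegree := by
      rw [hQeq, Polynomial.natDegree_sub_eq_right_of_natDegree_lt hlt, hcompd]
    exact hdvd s hs (by rw [← hQ, hQd]; exact dvd_mul_left p.natDegree P.natDegree)
end

section
/- Let p ∈ ℂ[z] with p(0) = 0, deg p = d ≥ 2, and let q ∈ ℂ[z] with q(0) = 0 and deg q ≥ 1 such that d ∤ deg q. Then the unique power series solution χ ∈ ℂ[[z]] with χ(0) = 0 of χ(z) = χ(p(z)) + q(z) is not a rational function. -/
open PowerSeries Finset

variable (p : Polynomial ℂ)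

lemma pow_coeff_zero (hp : p.coeff 0 = 0) {k n : ℕ} (hn : n < k) :
    (p ^ k).coeff n = 0 := by
  obtain ⟨r, hr⟩ : Polynomial.X ^ k ∣ p ^ k := pow_dvd_pow_of_dvd (Polynomial.X_dvd_iff.2 hp) k
  rw [hr, Polynomial.coeff_mul]
  refine Finset.sum_eq_zero fun ij hij => ?_
  rw [Polynomial.coeff_X_pow, if_neg, zero_mul]
  exact fun h => absurd (h ▸ Finset.HasAntidiagonal.antidiagonal.fst_le hij) (not_le.2 hn)

lemma comp_coeff_formula (hp : p.coeff 0 = 0) (u : Polynomial ℂ) (n : ℕ) :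
    (u.comp p).coeff n = ∑ k ∈ range (n + 1), u.coeff k * (p ^ k).coeff n := by
  rw [Polynomial.comp_eq_sum_left, u.sum_over_range (by simp)]
  simp only [Polynomial.finset_sum_coeff, Polynomial.coeff_C_mul]
  rcases le_total (u.natDegree + 1) (n + 1) with h | h
  · refine Finset.sum_subset (Finset.range_subset_range.2 h) fun k _ hk => ?_
    rw [Polynomial.coeff_eq_zero_of_natDegree_lt (by simpa using hk), zero_mul]
  · refine (Finset.sum_subset (Finset.range_subset_range.2 h) fun k _ hk => ?_).symm
    rw [pow_coeff_zero p hp (by simpa using hk), mul_zero]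

lemma comp_coeff_local (hp : p.coeff 0 = 0) {u v : Polynomial ℂ} {n : ℕ}
    (h : ∀ k ≤ n, u.coeff k = v.coeff k) :
    (u.comp p).coeff n = (v.comp p).coeff n := by
  rw [comp_coeff_formula p hp, comp_coeff_formula p hp]
  exact Finset.sum_congr rfl fun k hk => by
    rw [h k (by simpa using Nat.lt_succ_iff.1 (Finset.mem_range.1 hk))]

lemma psComp_coeff_trunc (hp : p.coeff 0 = 0) (f : PowerSeries ℂ) (n : ℕ) :
    PowerSeries.coeff n (psComp f ↑p) = ((f.trunc (n + 1)).comp p).coeff n := by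
  rw [psComp, PowerSeries.coeff_mk, comp_coeff_formula p hp]
  refine Finset.sum_congr rfl fun k hk => ?_
  rw [PowerSeries.coeff_trunc, if_pos (Finset.mem_range.1 hk), ← Polynomial.coe_pow,
    Polynomial.coeff_coe]

lemma psComp_mul (hp : p.coeff 0 = 0) (f g : PowerSeries ℂ) :
    psComp (f * g) ↑p = psComp f ↑p * psComp g ↑p := by
  ext n
  rw [psComp_coeff_trunc p hp, PowerSeries.coeff_mul]
  have step : (((f * g).trunc (n+1)).comp p).coeff n
      = (((f.trunc (n+1)).comp p) * ((g.trunc (n+1)).comp p)).coeff n := by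
    rw [← Polynomial.mul_comp]
    refine comp_coeff_local p hp fun k hk => ?_
    rw [PowerSeries.coeff_trunc, if_pos (Nat.lt_succ_of_le hk), PowerSeries.coeff_mul,
      Polynomial.coeff_mul]
    refine Finset.sum_congr rfl fun ij hij => ?_
    have h1 : ij.1 < n + 1 := Nat.lt_succ_of_le
      ((Finset.HasAntidiagonal.antidiagonal.fst_le hij).trans hk)
    have h2 : ij.2 < n + 1 := Nat.lt_succ_of_le
      ((Finset.HasAntidiagonal.antidiagonal.snd_le hij).trans hk)
    rw [PowerSeries.coeff_trunc, PowerSeries.coeff_trunc, if_pos h1, if_pos h2]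
  rw [step, Polynomial.coeff_mul]
  refine Finset.sum_congr rfl fun ij hij => ?_
  have h1 : ij.1 ≤ n := Finset.HasAntidiagonal.antidiagonal.fst_le hij
  have h2 : ij.2 ≤ n := Finset.HasAntidiagonal.antidiagonal.snd_le hij
  rw [psComp_coeff_trunc p hp, psComp_coeff_trunc p hp]
  congr 1
  · exact comp_coeff_local p hp fun k hk => by
      rw [PowerSeries.coeff_trunc, PowerSeries.coeff_trunc,
        if_pos (Nat.lt_succ_of_le hk), if_pos (Nat.lt_succ_of_le (hk.trans h1))]
  · exact comp_coeff_local p hp fun k hk => by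
      rw [PowerSeries.coeff_trunc, PowerSeries.coeff_trunc,
        if_pos (Nat.lt_succ_of_le hk), if_pos (Nat.lt_succ_of_le (hk.trans h2))]

lemma psComp_coe_s11 (hp : p.coeff 0 = 0) (u : Polynomial ℂ) :
    psComp ↑u ↑p = ↑(u.comp p) := by
  ext n
  rw [psComp_coeff_trunc p hp, Polynomial.coeff_coe]
  exact comp_coeff_local p hp fun k hk => by
    rw [PowerSeries.coeff_trunc, if_pos (Nat.lt_succ_of_le hk), Polynomial.coeff_coe]

lemma psComp_zero (g : PowerSeries ℂ) : psComp 0 g = 0 := by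
  ext n
  simp [psComp]

lemma deg_ineq (A B d : ℕ) (h1 : B < A) (h2 : 2 ≤ d) : B * d + A < B + A * d := by
  nlinarith

/-- If `p(0) = 0`, `ord_{z=0} p ≥ 2`, `deg p = d ≥ 2`, `q(0) = 0`, `deg q ≥ 1` and
`d ∤ deg q`, then the power series solution `χ` with `χ(0) = 0` of
`χ(z) = χ(p(z)) + q(z)` is not a rational function. -/
theorem stmt11 (p q : Polynomial ℂ) (d : ℕ) (hp0 : p.eval 0 = 0)
    (hord : 2 ≤ p.rootMultiplicity 0)
    (hd : p.natDegree = d) (hd2 : 2 ≤ d)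
    (hq0 : q.eval 0 = 0) (hq1 : 1 ≤ q.natDegree) (hdvd : ¬ d ∣ q.natDegree)
    (χ : PowerSeries ℂ) (hχ0 : constantCoeff χ = 0)
    (hχ : χ = psComp χ (p : PowerSeries ℂ) + (q : PowerSeries ℂ)) :
    ¬ ∃ a b : Polynomial ℂ, b ≠ 0 ∧ (b : PowerSeries ℂ) * χ = (a : PowerSeries ℂ) := by

  rintro ⟨a, b, hb, hab⟩
  have hp : p.coeff 0 = 0 := by rwa [Polynomial.coeff_zero_eq_eval_zero]
  have hq : q ≠ 0 := fun h => by simp [h] at hq1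
  have hbne : (b : PowerSeries ℂ) ≠ 0 := fun h => hb (Polynomial.coe_eq_zero_iff.1 h)
  have hpne : p ≠ 0 := fun h => by rw [h, Polynomial.natDegree_zero] at hd; omega
  have hdp : p.natDegree ≠ 0 := by omega
  have ha : a ≠ 0 := by
    intro h
    rw [h, Polynomial.coe_zero] at hab
    have hχz : χ = 0 := (mul_eq_zero.1 hab).resolve_left hbne
    rw [hχz, psComp_zero, zero_add] at hχ
    exact hq (Polynomial.coe_eq_zero_iff.1 hχ.symm)
  have h2 : (↑(b.comp p) : PowerSeries ℂ) * psComp χ ↑p = ↑(a.comp p) := by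
    rw [← psComp_coe_s11 p hp b, ← psComp_mul p hp, hab, psComp_coe_s11 p hp]
  have key : (↑(b.comp p) : PowerSeries ℂ) * ↑a
      = ↑b * ↑(a.comp p) + ↑(b.comp p) * ↑b * ↑q := by
    rw [← hab, ← h2]
    nth_rewrite 1 [hχ]
    ring
  have keyP : (b.comp p) * a = b * (a.comp p) + (b.comp p) * b * q := by
    rw [← Polynomial.coe_inj]
    push_cast
    exact_mod_cast key
  have hbc : b.comp p ≠ 0 := by
    have : (b.comp p).leadingCoeff ≠ 0 := by
      rw [Polynomial.leadingCoeff_comp hdp]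
      exact mul_ne_zero (Polynomial.leadingCoeff_ne_zero.2 hb)
        (pow_ne_zero _ (Polynomial.leadingCoeff_ne_zero.2 hpne))
    exact fun h => this (by rw [h, Polynomial.leadingCoeff_zero])
  have hac : a.comp p ≠ 0 := by
    have : (a.comp p).leadingCoeff ≠ 0 := by
      rw [Polynomial.leadingCoeff_comp hdp]
      exact mul_ne_zero (Polynomial.leadingCoeff_ne_zero.2 ha)
        (pow_ne_zero _ (Polynomial.leadingCoeff_ne_zero.2 hpne))
    exact fun h => this (by rw [h, Polynomial.leadingCoeff_zero])
  set A := a.natDegree with hA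
  set B := b.natDegree with hB
  set Q := q.natDegree with hQdef
  have d1 : ((b.comp p) * a).natDegree = B * d + A := by
    rw [Polynomial.natDegree_mul hbc ha, Polynomial.natDegree_comp, hd]
  have d2 : (b * (a.comp p)).natDegree = B + A * d := by
    rw [Polynomial.natDegree_mul hb hac, Polynomial.natDegree_comp, hd]
  have d3 : ((b.comp p) * b * q).natDegree = B * d + B + Q := by
    rw [Polynomial.natDegree_mul (mul_ne_zero hbc hb) hq, Polynomial.natDegree_mul hbc hb,
      Polynomial.natDegree_comp, hd]
  rcases le_or_gt A B with hAB | hBA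
  · have e : (b.comp p) * b * q = (b.comp p) * a - b * (a.comp p) := by
      rw [keyP]; ring
    have hle : ((b.comp p) * b * q).natDegree ≤ B * d + B := by
      rw [e]
      refine le_trans (Polynomial.natDegree_sub_le _ _) (max_le ?_ ?_)
      · rw [d1]; omega
      · rw [d2]
        have := Nat.mul_le_mul_right d hAB
        omega
    rw [d3] at hle
    omega
  · by_cases hQ : B * d + B + Q = B * d + A
    · have hle : (b * (a.comp p)).natDegree ≤ B * d + A := by
        have e : b * (a.comp p) = (b.comp p) * a - (b.comp p) * b * q := by
          rw [keyP]; ring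
        rw [e]
        exact le_trans (Polynomial.natDegree_sub_le _ _)
          (max_le (le_of_eq d1) (le_of_eq (d3.trans hQ)))
      rw [d2] at hle
      exact absurd hle (not_le.2 (deg_ineq A B d hBA hd2))
    · have e : b * (a.comp p) = (b.comp p) * a - (b.comp p) * b * q := by
        rw [keyP]; ring
      rcases lt_or_gt_of_ne hQ with h | h
      · have heq : (b * (a.comp p)).natDegree = B * d + A := by
          rw [e, Polynomial.natDegree_sub_eq_left_of_natDegree_lt (by rw [d1, d3]; omega), d1]
        rw [d2] at heq
        have := deg_ineq A B d hBA hd2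
        omega
      · have heq : (b * (a.comp p)).natDegree = B * d + B + Q := by
          rw [e, Polynomial.natDegree_sub_eq_right_of_natDegree_lt (by rw [d1, d3]; omega), d3]
        rw [d2] at heq
        refine hdvd ⟨A - B, ?_⟩
        have h2' : B * d ≤ A * d := Nat.mul_le_mul_right d (le_of_lt hBA)
        have : Q = (A - B) * d := by rw [Nat.sub_mul]; omega
        rw [this, mul_comm]
end
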